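/- Let Θ(r_1,…,r_{d−1}) denote the set of tensors in ℝ^{p_1×⋯×p_d} whose j-th sequential matricization has rank at most r_j for every 1 ≤ j ≤ d−1, and let P_{Θ(r_1′,…,r_{d−1}′)} be the approximate projection defined by sequential rank truncation. Suppose X ∈ Θ(r_1″,…,r_{d−1}″), Y ∈ Θ(r_1,…,r_{d−1}), and r_i < r_i′ < r_i″ for all 1 ≤ i ≤ d−1. Then ‖P_{Θ(r_1′,…,r_{d−1}′)}(X) − X‖_F ≤ [∏_{i=1}^{d−1}(β_i + 1) − 1]·‖Y − X‖_F, where β_i = √((r_i″ − r_i′)/(r_i″ − r_i)). -/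

import Mathlib

open scoped BigOperators
open MeasureTheory ProbabilityTheory Filter

namespace TTpaper
open Matrix

/-- A real tensor of order `d` with dimension vector `p`. -/
abbrev Tensor {d : ℕ} (p : Fin d → ℕ) : Type := ((k : Fin d) → Fin (p k)) → ℝ

/-- Frobenius norm of a tensor. -/
noncomputable def fnorm {d : ℕ} {p : Fin d → ℕ} (X : Tensor p) : ℝ :=
  Real.sqrt (∑ i, X i ^ 2)

/-- Inner product of two tensors of the same size (sum of entrywise products). -/
noncomputable def tinner {d : ℕ} {p : Fin d → ℕ} (X Y : Tensor p) : ℝ :=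
  ∑ i, X i * Y i

/-- The `k`-th sequential matricization of a tensor: rows enumerate the indices of
modes `1,…,k` and columns enumerate the indices of modes `k+1,…,d`. -/
def seqMat {d : ℕ} (p : Fin d → ℕ) (k : ℕ) (X : Tensor p) :
    Matrix ((j : {j : Fin d // j.val < k}) → Fin (p j.1))
      ((j : {j : Fin d // ¬ j.val < k}) → Fin (p j.1)) ℝ :=
  fun a b => X fun j => if h : j.val < k then a ⟨j, h⟩ else b ⟨j, h⟩

/-- The entries of the tensor-train chain product
`G_1(i_1) G_2(i_2) ⋯ G_d(i_d)`, written as a sum over all bond indices. -/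
noncomputable def ttEntry {d : ℕ} (p : Fin d → ℕ) (r : Fin (d + 1) → ℕ)
    (G : (k : Fin d) → Fin (p k) → Fin (r k.castSucc) → Fin (r k.succ) → ℝ) : Tensor p :=
  fun i => ∑ a : (j : Fin (d + 1)) → Fin (r j),
    ∏ k : Fin d, G k (i k) (a k.castSucc) (a k.succ)

/-- `X` is in tensor-train format with bond dimension vector `r`
(whose boundary entries equal `1`). -/
def IsTT {d : ℕ} (p : Fin d → ℕ) (r : Fin (d + 1) → ℕ) (X : Tensor p) : Prop :=
  r 0 = 1 ∧ r (Fin.last d) = 1 ∧ ∃ G, X = ttEntry p r G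

/-- Merge an index for the first `n` modes and an index for the last `m` modes into
an index for a tensor with appended dimension vector. -/
def splice {n m : ℕ} {q : Fin n → ℕ} {p : Fin m → ℕ}
    (a : (j : Fin n) → Fin (q j)) (b : (i : Fin m) → Fin (p i)) :
    (j : Fin (n + m)) → Fin (Fin.append q p j) :=
  Fin.addCases (motive := fun j => Fin (Fin.append q p j))
    (fun i => Fin.cast (Fin.append_left q p i).symm (a i))
    (fun i => Fin.cast (Fin.append_right q p i).symm (b i))

/-- The part of an index of an appended tensor corresponding to the first block of modes. -/
def unleft {n m : ℕ} {q : Fin n → ℕ} {p : Fin m → ℕ}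
    (idx : (j : Fin (n + m)) → Fin (Fin.append q p j)) (i : Fin n) : Fin (q i) :=
  Fin.cast (Fin.append_left q p i) (idx (Fin.castAdd m i))

/-- The part of an index of an appended tensor corresponding to the second block of modes. -/
def unright {n m : ℕ} {q : Fin n → ℕ} {p : Fin m → ℕ}
    (idx : (j : Fin (n + m)) → Fin (Fin.append q p j)) (i : Fin m) : Fin (p i) :=
  Fin.cast (Fin.append_right q p i) (idx (Fin.natAdd n i))

/-- Generalized inner product `⟨A, X⟩` of a coefficient tensor
`A ∈ ℝ^{q_1×⋯×q_n×p_1×⋯×p_m}` with a tensor `X ∈ ℝ^{p_1×⋯×p_m}`. -/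
noncomputable def ginner {n m : ℕ} {q : Fin n → ℕ} {p : Fin m → ℕ}
    (A : Tensor (Fin.append q p)) (X : Tensor p) : Tensor q :=
  fun j => ∑ i, A (splice j i) * X i

/-- The matricization of an appended tensor separating the two blocks of modes. -/
def gmat {n m : ℕ} {q : Fin n → ℕ} {p : Fin m → ℕ} (A : Tensor (Fin.append q p)) :
    Matrix ((j : Fin n) → Fin (q j)) ((i : Fin m) → Fin (p i)) ℝ :=
  fun a b => A (splice a b)

/-- The rearrangement `M(A)` of an appended tensor reversing the order of the
modes of its second block. -/
def modeRev {n m : ℕ} {q : Fin n → ℕ} {p : Fin m → ℕ} (A : Tensor (Fin.append q p)) :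
    Tensor (Fin.append q (fun i => p i.rev)) :=
  fun idx => A (splice (unleft idx)
    (fun i => Fin.cast (congrArg p (Fin.rev_rev i)) (unright idx i.rev)))

/-- Convert a row index of the `n`-th sequential matricization of an appended tensor
into an index over the first block of modes. -/
def unrow {n m : ℕ} {q : Fin n → ℕ} {p : Fin m → ℕ}
    (a : (j : {j : Fin (n + m) // j.val < n}) → Fin (Fin.append q p j.1)) (j : Fin n) :
    Fin (q j) :=
  Fin.cast (Fin.append_left q p j) (a ⟨Fin.castAdd m j, j.isLt⟩)

/-- Convert a column index of the `n`-th sequential matricization of an appended tensor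
into an index over the second block of modes. -/
def uncol {n m : ℕ} {q : Fin n → ℕ} {p : Fin m → ℕ}
    (b : (j : {j : Fin (n + m) // ¬ j.val < n}) → Fin (Fin.append q p j.1)) (i : Fin m) :
    Fin (p i) :=
  Fin.cast (Fin.append_right q p i)
    (b ⟨Fin.natAdd n i, Nat.not_lt.mpr (Nat.le_add_right n i.val)⟩)

/-- Dimension vector `(L, p_1, …, p_d)` of a stacked tensor. -/
def consDim {d : ℕ} (L : ℕ) (p : Fin d → ℕ) : Fin (d + 1) → ℕ :=
  Fin.cons (α := fun _ => ℕ) L p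

/-- Head (lag) component of an index of a stacked tensor with dimensions `(L, p_1, …, p_d)`. -/
def headIdx {d L : ℕ} {p : Fin d → ℕ}
    (idx : (j : Fin (d + 1)) → Fin (consDim L p j)) : Fin L :=
  Fin.cast (Fin.cons_zero (α := fun _ => ℕ) L p) (idx 0)

/-- Tail component of an index of a stacked tensor with dimensions `(L, p_1, …, p_d)`. -/
def tailIdx {d L : ℕ} {p : Fin d → ℕ}
    (idx : (j : Fin (d + 1)) → Fin (consDim L p j)) (k : Fin d) : Fin (p k) :=
  Fin.cast (Fin.cons_succ (α := fun _ => ℕ) L p k) (idx k.succ)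

/-- Build an index of a stacked tensor with dimensions `(L, p_1, …, p_d)` from a lag
and an index over `(p_1, …, p_d)`. -/
def consIdx {d L : ℕ} {p : Fin d → ℕ} (h : Fin L) (b : (k : Fin d) → Fin (p k)) :
    (j : Fin (d + 1)) → Fin (consDim L p j) :=
  fun j => Fin.cases (motive := fun j => Fin (consDim L p j))
    (Fin.cast (Fin.cons_zero (α := fun _ => ℕ) L p).symm h)
    (fun k => Fin.cast (Fin.cons_succ (α := fun _ => ℕ) L p k).symm (b k)) j

/-- The `j`-th lag coefficient tensor `A_j` sliced out of a stacked coefficient tensor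
`A_{1:p} ∈ ℝ^{p_1×⋯×p_d×L×p_1×⋯×p_d}`. -/
def lagSlice {d L : ℕ} {p : Fin d → ℕ}
    (A : Tensor (Fin.append p (consDim L p))) (h : Fin L) :
    Tensor (Fin.append p p) :=
  fun idx => A (splice (unleft idx) (consIdx h (unright idx)))

/-- Squared Frobenius norm of a matrix. -/
noncomputable def mfnormSq {I J : Type*} [Fintype I] [Fintype J] (M : Matrix I J ℝ) : ℝ :=
  ∑ i, ∑ j, M i j ^ 2

/-- Frobenius norm of a matrix. -/
noncomputable def mfnorm {I J : Type*} [Fintype I] [Fintype J] (M : Matrix I J ℝ) : ℝ :=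
  Real.sqrt (mfnormSq M)

/-- The minimal squared Frobenius distance of `M` to the matrices of rank at most `k`,
i.e. the sum of its squared singular values of index `> k`. -/
noncomputable def tailSq {I J : Type*} [Fintype I] [Fintype J]
    (M : Matrix I J ℝ) (k : ℕ) : ℝ :=
  sInf {x | ∃ C : Matrix I J ℝ, C.rank ≤ k ∧ x = mfnormSq (M - C)}

/-- The `r`-th largest singular value of a matrix (for `r ≥ 1`). -/
noncomputable def singval {I J : Type*} [Fintype I] [Fintype J]
    (M : Matrix I J ℝ) (r : ℕ) : ℝ :=
  Real.sqrt (tailSq M (r - 1) - tailSq M r)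

/-- The set of Rayleigh-quotient values `re(v* Ā(z)A(z) v)` over unit `z ∈ ℂ` and unit
vectors `v`; its infimum is `μ_min` and its supremum is `μ_max` of the matrix
polynomial `A(z) = Φ z`. -/
noncomputable def muQuadSet {I : Type*} [Fintype I] (Φ : ℂ → Matrix I I ℂ) : Set ℝ :=
  {x | ∃ z : ℂ, ‖z‖ = 1 ∧ ∃ v : I → ℂ, (∑ i, Complex.normSq (v i)) = 1 ∧
    x = (dotProduct (star v) (((Φ z).conjTranspose * Φ z).mulVec v)).re}

/-- The matrix polynomial `A(z) = I - z·A` of a lag-one autoregression. -/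
noncomputable def arPoly {I : Type*} [Fintype I] [DecidableEq I]
    (M : Matrix I I ℝ) (z : ℂ) : Matrix I I ℂ :=
  1 - z • M.map (Complex.ofReal)

/-- `μ_min` of a lag-one autoregression coefficient matrix. -/
noncomputable def muMin {I : Type*} [Fintype I] [DecidableEq I] (M : Matrix I I ℝ) : ℝ :=
  sInf (muQuadSet (arPoly M))

/-- `μ_max` of a lag-one autoregression coefficient matrix. -/
noncomputable def muMax {I : Type*} [Fintype I] [DecidableEq I] (M : Matrix I I ℝ) : ℝ :=
  sSup (muQuadSet (arPoly M))

/-- All complex eigenvalues of the real matrix `M` have modulus `< 1`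
(spectral radius strictly less than one). -/
def SpecLT1 {I : Type*} [Fintype I] [DecidableEq I] (M : Matrix I I ℝ) : Prop :=
  ∀ z ∈ spectrum ℂ (M.map (Complex.ofReal)), ‖z‖ < 1

/-- A random vector is `c`-sub-Gaussian: its moment generating function satisfies
`E exp⟨u, x⟩ ≤ exp(c‖u‖²/2)` for all `u`. -/
def SubGVec {Ω : Type*} [MeasurableSpace Ω] (μ : Measure Ω) {I : Type*} [Fintype I]
    (c : ℝ) (x : Ω → I → ℝ) : Prop :=
  ∀ u : I → ℝ, ∫ ω, Real.exp (∑ i, u i * x ω i) ∂μ ≤ Real.exp (c * (∑ i, u i ^ 2) / 2)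

/-- A random variable is `c`-sub-Gaussian. -/
def SubGScalar {Ω : Type*} [MeasurableSpace Ω] (μ : Measure Ω) (c : ℝ) (ξ : Ω → ℝ) : Prop :=
  ∀ u : ℝ, ∫ ω, Real.exp (u * ξ ω) ∂μ ≤ Real.exp (c * u ^ 2 / 2)

/-- Extend an interior rank vector `(r_1, …, r_K)` to all integer indices, with the
boundary ranks equal to `1`. -/
def extRank {K : ℕ} (R : Fin K → ℕ) (k : ℕ) : ℕ :=
  if h : 1 ≤ k ∧ k ≤ K then R ⟨k - 1, by omega⟩ else 1




/-- Orthogonal diagonalization of `A * Aᵀ` with eigenvalues sorted in decreasing order. -/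
lemma exists_W {m n : Type*} [Fintype m] [Fintype n] [DecidableEq m]
    (A : Matrix m n ℝ) :
    ∃ (N : ℕ) (W : Matrix (Fin N) m ℝ) (lam : Fin N → ℝ),
      Wᵀ * W = 1 ∧ W * Wᵀ = 1 ∧ Antitone lam ∧ (∀ i, 0 ≤ lam i) ∧
      (W * A) * (W * A)ᵀ = Matrix.diagonal lam ∧
      (∀ i : Fin N, A.rank ≤ i.val → lam i = 0) := by
  classical
  set S : Matrix m m ℝ := A * Aᵀ with hSdef
  have hS : S.IsHermitian := by
    show Sᴴ = S
    ext i j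
    simp only [Matrix.conjTranspose_apply, star_trivial, Matrix.mul_apply, hSdef,
      Matrix.transpose_apply]
    exact Finset.sum_congr rfl fun k _ => mul_comm _ _
  set N := Fintype.card m with hN
  set e : m ≃ Fin N := Fintype.equivFin m with he
  set μ : Fin N → ℝ := fun i => hS.eigenvalues (e.symm i) with hμ
  set σ : Equiv.Perm (Fin N) := Tuple.sort (fun i => -μ i) with hσ
  set lam : Fin N → ℝ := fun i => μ (σ i) with hlam
  have hanti : Antitone lam := by
    intro i j hij
    have := Tuple.monotone_sort (fun i => -μ i) hij
    simpa [hlam] using this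
  set π : Fin N ≃ m := σ.trans e.symm with hπ
  set U : Matrix m m ℝ := (hS.eigenvectorUnitary : Matrix m m ℝ) with hU
  have hU1 : Uᵀ * U = 1 := by
    rw [← Matrix.conjTranspose_eq_transpose_of_trivial]
    exact hS.eigenvectorUnitary.2.1
  have hU2 : U * Uᵀ = 1 := by
    rw [← Matrix.conjTranspose_eq_transpose_of_trivial]
    exact hS.eigenvectorUnitary.2.2
  set W : Matrix (Fin N) m ℝ := Uᵀ.submatrix π id with hW
  have hWt : Wᵀ = U.submatrix id π := by
    rw [hW, Matrix.transpose_submatrix, Matrix.transpose_transpose]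
  have hWtW : Wᵀ * W = 1 := by
    rw [hWt, hW, ← Matrix.submatrix_mul U Uᵀ id π id π.bijective, hU2,
      Matrix.submatrix_id_id]
  have hWWt : W * Wᵀ = 1 := by
    rw [hWt, hW, ← Matrix.submatrix_mul Uᵀ U π id π Function.bijective_id, hU1]
    exact Matrix.submatrix_one_equiv π
  have hspec : Uᵀ * S * U = Matrix.diagonal (hS.eigenvalues) := by
    have h0 := hS.spectral_theorem
    have hsU : (star (hS.eigenvectorUnitary : Matrix m m ℝ)) = Uᵀ := by
      rw [hU]; exact Matrix.conjTranspose_eq_transpose_of_trivial _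
    simp only [Unitary.conjStarAlgAut_apply, Unitary.coe_star] at h0
    rw [hsU] at h0
    have hofReal : (RCLike.ofReal ∘ hS.eigenvalues : m → ℝ) = hS.eigenvalues := by
      ext x; simp
    rw [hofReal] at h0
    calc Uᵀ * S * U = Uᵀ * (U * Matrix.diagonal hS.eigenvalues * Uᵀ) * U := by rw [← h0]
    _ = (Uᵀ * U) * Matrix.diagonal hS.eigenvalues * (Uᵀ * U) := by
        simp only [Matrix.mul_assoc]
    _ = Matrix.diagonal (hS.eigenvalues) := by rw [hU1, Matrix.one_mul, Matrix.mul_one]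
  have hdiag : (W * A) * (W * A)ᵀ = Matrix.diagonal lam := by
    have h1 : (W * A) * (W * A)ᵀ = W * S * Wᵀ := by
      rw [Matrix.transpose_mul, hSdef]
      simp only [Matrix.mul_assoc]
    rw [h1, hWt, hW]
    have h2 : (Uᵀ.submatrix π id) * S = (Uᵀ * S).submatrix π id := by
      rw [Matrix.submatrix_mul Uᵀ S π id id Function.bijective_id,
        Matrix.submatrix_id_id]
    rw [h2, ← Matrix.submatrix_mul (Uᵀ * S) U π id π Function.bijective_id, hspec,
      Matrix.submatrix_diagonal _ π π.injective]
    congr 1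
  have hentry : ∀ i, lam i = ∑ b, ((W * A) i b) ^ 2 := by
    intro i
    have h3 := congrFun (congrFun hdiag i) i
    simp only [Matrix.mul_apply, Matrix.transpose_apply, Matrix.diagonal_apply_eq] at h3
    rw [← h3]
    exact Finset.sum_congr rfl fun b _ => (sq ((W * A) i b)).symm
  have hnn : ∀ i, 0 ≤ lam i := by
    intro i
    rw [hentry i]
    exact Finset.sum_nonneg fun b _ => sq_nonneg _
  refine ⟨N, W, lam, hWtW, hWWt, hanti, hnn, hdiag, ?_⟩
  intro i hi
  by_contra hne
  have hipos : 0 < lam i := lt_of_le_of_ne (hnn i) (Ne.symm hne)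
  have hcard : Fintype.card {j // lam j ≠ 0} ≤ A.rank := by
    have h1 : (Matrix.diagonal lam).rank = Fintype.card {j // lam j ≠ 0} :=
      Matrix.rank_diagonal lam
    have h2 : ((W * A) * (W * A)ᵀ).rank = (W * A).rank :=
      Matrix.rank_self_mul_transpose _
    have h3 : (W * A).rank ≤ A.rank := Matrix.rank_mul_le_right _ _
    rw [hdiag] at h2
    omega
  have hinj : Function.Injective (fun k : Fin (i.val + 1) =>
      (⟨⟨k.val, lt_of_le_of_lt (Nat.lt_succ_iff.mp k.isLt) i.isLt⟩,
        by
          have hle : (⟨k.val, lt_of_le_of_lt (Nat.lt_succ_iff.mp k.isLt) i.isLt⟩ : Fin N) ≤ i :=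
            Nat.lt_succ_iff.mp k.isLt
          exact ne_of_gt (lt_of_lt_of_le hipos (hanti hle))⟩ :
        {j // lam j ≠ 0})) := by
    intro a b hab
    have : (a : ℕ) = (b : ℕ) := congrArg (fun x : {j // lam j ≠ 0} => (x.1 : ℕ)) hab
    exact Fin.ext this
  have := Fintype.card_le_of_injective _ hinj
  rw [Fintype.card_fin] at this
  omega


lemma mfnormSq_nonneg {I J : Type*} [Fintype I] [Fintype J] (M : Matrix I J ℝ) :
    0 ≤ mfnormSq M :=
  Finset.sum_nonneg fun _ _ => Finset.sum_nonneg fun _ _ => sq_nonneg _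

lemma mfnormSq_eq_trace {I J : Type*} [Fintype I] [Fintype J] (M : Matrix I J ℝ) :
    mfnormSq M = Matrix.trace (Mᵀ * M) := by
  simp only [mfnormSq, Matrix.trace, Matrix.diag_apply, Matrix.mul_apply,
    Matrix.transpose_apply, sq]
  exact Finset.sum_comm

lemma mfnormSq_mul_of_orth {I J K : Type*} [Fintype I] [Fintype J] [Fintype K]
    [DecidableEq I] {W : Matrix K I ℝ} (h : Wᵀ * W = 1) (M : Matrix I J ℝ) :
    mfnormSq (W * M) = mfnormSq M := by
  rw [mfnormSq_eq_trace, mfnormSq_eq_trace M, Matrix.transpose_mul, Matrix.mul_assoc,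
    ← Matrix.mul_assoc Wᵀ W M, h, Matrix.one_mul]

lemma card_filter_lt_eq {N r : ℕ} (h : r ≤ N) :
    (Finset.univ.filter fun i : Fin N => i.val < r).card = r := by
  have h0 : (Finset.univ.filter fun i : Fin N => i.val < r).card = (Finset.range r).card :=
    Finset.card_bij' (fun a _ => a.val)
      (fun k hk => ⟨k, lt_of_lt_of_le (Finset.mem_range.mp hk) h⟩)
      (fun a ha => Finset.mem_range.mpr (Finset.mem_filter.mp ha).2)
      (fun k hk => Finset.mem_filter.mpr ⟨Finset.mem_univ _, Finset.mem_range.mp hk⟩)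
      (fun a _ => rfl) (fun k _ => rfl)
  rw [h0, Finset.card_range]

lemma card_filter_between_eq {N r r' : ℕ} (h : r' ≤ N) :
    (Finset.univ.filter fun i : Fin N => r ≤ i.val ∧ i.val < r').card = r' - r := by
  have h0 : (Finset.univ.filter fun i : Fin N => r ≤ i.val ∧ i.val < r').card
      = (Finset.Ico r r').card :=
    Finset.card_bij' (fun a _ => a.val)
      (fun k hk => ⟨k, lt_of_lt_of_le (Finset.mem_Ico.mp hk).2 h⟩)
      (fun a ha => Finset.mem_Ico.mpr ⟨(Finset.mem_filter.mp ha).2.1, (Finset.mem_filter.mp ha).2.2⟩)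
      (fun k hk => Finset.mem_filter.mpr ⟨Finset.mem_univ _, (Finset.mem_Ico.mp hk).1, (Finset.mem_Ico.mp hk).2⟩)
      (fun a _ => rfl) (fun k _ => rfl)
  rw [h0, Nat.card_Ico]

lemma card_filter_between_le {N r r' : ℕ} :
    (Finset.univ.filter fun i : Fin N => r ≤ i.val ∧ i.val < r').card ≤ r' - r := by
  have h0 : (Finset.univ.filter fun i : Fin N => r ≤ i.val ∧ i.val < r').card
      ≤ (Finset.range (r' - r)).card := by
    apply Finset.card_le_card_of_injOn (fun a => a.val - r)
    · intro a ha
      have := (Finset.mem_filter.mp ha).2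
      exact Finset.mem_range.mpr (by show a.val - r < r' - r; omega)
    · intro a ha b hb hab
      have ha' := (Finset.mem_filter.mp ha).2
      have hb' := (Finset.mem_filter.mp hb).2
      have hab' : a.val - r = b.val - r := hab
      have : a.val = b.val := by omega
      exact Fin.ext this
  rw [Finset.card_range] at h0
  exact h0

lemma card_filter_lt_le {N r : ℕ} :
    (Finset.univ.filter fun i : Fin N => i.val < r).card ≤ r := by
  have h0 : (Finset.univ.filter fun i : Fin N => i.val < r).card ≤ (Finset.range r).card := by
    apply Finset.card_le_card_of_injOn (fun a => a.val)
    · intro a ha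
      exact Finset.mem_range.mpr (Finset.mem_filter.mp ha).2
    · intro a _ b _ hab
      exact Fin.ext hab
  rw [Finset.card_range] at h0
  exact h0

/-- Ky Fan type bound: `∑ λᵢ tᵢ ≤ ∑_{i<r} λᵢ` for `λ` decreasing nonnegative,
`0 ≤ tᵢ ≤ 1`, `∑ tᵢ ≤ r`. -/
lemma kyfan {N r : ℕ} (lam t : Fin N → ℝ) (hanti : Antitone lam)
    (hnn : ∀ i, 0 ≤ lam i) (ht0 : ∀ i, 0 ≤ t i) (ht1 : ∀ i, t i ≤ 1)
    (hsum : ∑ i, t i ≤ (r : ℝ)) :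
    ∑ i, lam i * t i ≤ ∑ i ∈ Finset.univ.filter (fun i : Fin N => i.val < r), lam i := by
  by_cases hrN : N ≤ r
  · have hfil : (Finset.univ.filter fun i : Fin N => i.val < r) = Finset.univ := by
      apply Finset.filter_true_of_mem
      intro i _
      exact lt_of_lt_of_le i.isLt hrN
    rw [hfil]
    exact Finset.sum_le_sum fun i _ => mul_le_of_le_one_right (hnn i) (ht1 i)
  · push_neg at hrN
    set v : ℝ := lam ⟨r, hrN⟩ with hv
    have hv0 : 0 ≤ v := hnn _
    have hsplit := Finset.sum_filter_add_sum_filter_not Finset.univ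
      (fun i : Fin N => i.val < r) (fun i => lam i * t i)
    have hsplitt := Finset.sum_filter_add_sum_filter_not Finset.univ
      (fun i : Fin N => i.val < r) t
    set S1 := Finset.univ.filter (fun i : Fin N => i.val < r) with hS1
    set S2 := Finset.univ.filter (fun i : Fin N => ¬ i.val < r) with hS2
    have hcard : S1.card = r := card_filter_lt_eq (le_of_lt hrN)
    have h1 : ∑ i ∈ S1, lam i * t i ≤ ∑ i ∈ S1, (lam i + v * (t i - 1)) := by
      apply Finset.sum_le_sum
      intro i hi
      have hir : i.val < r := (Finset.mem_filter.mp hi).2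
      have hlv : v ≤ lam i := hanti (show i ≤ ⟨r, hrN⟩ from le_of_lt hir)
      nlinarith [ht1 i]
    have h2 : ∑ i ∈ S2, lam i * t i ≤ ∑ i ∈ S2, v * t i := by
      apply Finset.sum_le_sum
      intro i hi
      have hir : ¬ i.val < r := (Finset.mem_filter.mp hi).2
      have hlv : lam i ≤ v := hanti (show (⟨r, hrN⟩ : Fin N) ≤ i from le_of_not_gt hir)
      exact mul_le_mul_of_nonneg_right hlv (ht0 i)
    have h3 : ∑ i ∈ S1, (lam i + v * (t i - 1)) =
        ∑ i ∈ S1, lam i + v * ∑ i ∈ S1, t i - v * r := by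
      rw [Finset.sum_add_distrib, ← Finset.mul_sum, Finset.sum_sub_distrib,
        Finset.sum_const, hcard]
      push_cast
      ring
    have h4 : ∑ i ∈ S2, v * t i = v * ∑ i ∈ S2, t i := by rw [Finset.mul_sum]
    have h5 : v * ∑ i ∈ S1, t i + v * ∑ i ∈ S2, t i = v * ∑ i, t i := by
      rw [← mul_add, hsplitt]
    nlinarith [mul_le_mul_of_nonneg_left hsum hv0]

/-- tail-sum comparison for a sorted nonnegative sequence vanishing past `r''`. -/
lemma sorted_tail_le {N r r' r'' : ℕ} (lam : Fin N → ℝ) (hanti : Antitone lam)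
    (hnn : ∀ i, 0 ≤ lam i) (hzero : ∀ i : Fin N, r'' ≤ i.val → lam i = 0)
    (h1 : r < r') (h2 : r' < r'') :
    (∑ i ∈ Finset.univ.filter (fun i : Fin N => r' ≤ i.val), lam i) * ((r'' : ℝ) - r) ≤
      (∑ i ∈ Finset.univ.filter (fun i : Fin N => r ≤ i.val), lam i) * ((r'' : ℝ) - r') := by
  have hnnL : 0 ≤ ∑ i ∈ Finset.univ.filter (fun i : Fin N => r' ≤ i.val), lam i :=
    Finset.sum_nonneg fun i _ => hnn i
  have hnnR : 0 ≤ ∑ i ∈ Finset.univ.filter (fun i : Fin N => r ≤ i.val), lam i :=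
    Finset.sum_nonneg fun i _ => hnn i
  -- split the RHS sum
  have hsplit : ∑ i ∈ Finset.univ.filter (fun i : Fin N => r ≤ i.val), lam i =
      ∑ i ∈ Finset.univ.filter (fun i : Fin N => r ≤ i.val ∧ i.val < r'), lam i +
      ∑ i ∈ Finset.univ.filter (fun i : Fin N => r' ≤ i.val), lam i := by
    have := Finset.sum_filter_add_sum_filter_not
      (Finset.univ.filter (fun i : Fin N => r ≤ i.val)) (fun i => i.val < r') lam
    rw [Finset.filter_filter, Finset.filter_filter] at this
    rw [← this]
    congr 1
    apply Finset.sum_congr _ (fun _ _ => rfl)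
    apply Finset.filter_congr
    intro i _
    constructor
    · intro h; omega
    · intro h; omega
  by_cases hr'N : N ≤ r'
  · have hfil : (Finset.univ.filter fun i : Fin N => r' ≤ i.val) = ∅ := by
      apply Finset.filter_eq_empty_iff.mpr
      intro i _
      have := i.isLt
      omega
    rw [hfil]
    simp only [Finset.sum_empty, zero_mul]
    apply mul_nonneg hnnR
    have : (r' : ℝ) < r'' := by exact_mod_cast h2
    linarith
  · push_neg at hr'N
    set v : ℝ := lam ⟨r', hr'N⟩ with hv
    have hv0 : 0 ≤ v := hnn _
    -- upper bound on the r'-tail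
    have hL : ∑ i ∈ Finset.univ.filter (fun i : Fin N => r' ≤ i.val), lam i ≤
        ((r'' : ℝ) - r') * v := by
      have hsplit2 : ∑ i ∈ Finset.univ.filter (fun i : Fin N => r' ≤ i.val), lam i =
          ∑ i ∈ Finset.univ.filter (fun i : Fin N => r' ≤ i.val ∧ i.val < r''), lam i := by
        have := Finset.sum_filter_add_sum_filter_not
          (Finset.univ.filter (fun i : Fin N => r' ≤ i.val)) (fun i => i.val < r'') lam
        rw [Finset.filter_filter, Finset.filter_filter] at this
        rw [← this]
        have hzz : ∑ i ∈ Finset.univ.filter (fun i : Fin N => r' ≤ i.val ∧ ¬ i.val < r''), lam i = 0 := by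
          apply Finset.sum_eq_zero
          intro i hi
          exact hzero i (by have := (Finset.mem_filter.mp hi).2; omega)
        rw [hzz, add_zero]
      rw [hsplit2]
      calc ∑ i ∈ Finset.univ.filter (fun i : Fin N => r' ≤ i.val ∧ i.val < r''), lam i
          ≤ (Finset.univ.filter (fun i : Fin N => r' ≤ i.val ∧ i.val < r'')).card • v := by
            apply Finset.sum_le_card_nsmul
            intro i hi
            exact hanti (show (⟨r', hr'N⟩ : Fin N) ≤ i from (Finset.mem_filter.mp hi).2.1)
        _ ≤ ((r'' : ℝ) - r') * v := by
            rw [nsmul_eq_mul]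
            apply mul_le_mul_of_nonneg_right _ hv0
            have hcle : (Finset.univ.filter (fun i : Fin N => r' ≤ i.val ∧ i.val < r'')).card ≤ r'' - r' :=
              card_filter_between_le
            have : ((Finset.univ.filter (fun i : Fin N => r' ≤ i.val ∧ i.val < r'')).card : ℝ) ≤ ((r'' - r' : ℕ) : ℝ) := by
              exact_mod_cast hcle
            have hcast : ((r'' - r' : ℕ) : ℝ) = (r'' : ℝ) - r' := by
              have : r' ≤ r'' := le_of_lt h2
              push_cast [this]
              ring
            linarith
    -- lower bound on the middle block
    have hM : ((r' : ℝ) - r) * v ≤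
        ∑ i ∈ Finset.univ.filter (fun i : Fin N => r ≤ i.val ∧ i.val < r'), lam i := by
      have hcard : (Finset.univ.filter (fun i : Fin N => r ≤ i.val ∧ i.val < r')).card = r' - r :=
        card_filter_between_eq (le_of_lt hr'N)
      calc ((r' : ℝ) - r) * v = ((r' - r : ℕ) : ℝ) * v := by
            have : r ≤ r' := le_of_lt h1
            push_cast [this]
            ring
        _ = (Finset.univ.filter (fun i : Fin N => r ≤ i.val ∧ i.val < r')).card • v := by
            rw [nsmul_eq_mul, hcard]
        _ ≤ ∑ i ∈ Finset.univ.filter (fun i : Fin N => r ≤ i.val ∧ i.val < r'), lam i := by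
            apply Finset.card_nsmul_le_sum
            intro i hi
            exact hanti (show i ≤ (⟨r', hr'N⟩ : Fin N) from le_of_lt (Finset.mem_filter.mp hi).2.2)
    rw [hsplit]
    have hc1 : (r : ℝ) < r' := by exact_mod_cast h1
    have hc2 : (r' : ℝ) < r'' := by exact_mod_cast h2
    nlinarith [mul_le_mul_of_nonneg_right hL (by linarith : (0:ℝ) ≤ (r' : ℝ) - r),
      mul_le_mul_of_nonneg_right hM (by linarith : (0:ℝ) ≤ (r'' : ℝ) - r')]


lemma cross_expand {β ι : Type*} [Fintype β] (f : β → ℝ) (V : ι → β → ℝ)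
    (K : Finset ι) (c : ι → ℝ) :
    ∑ b, f b * (∑ k ∈ K, c k * V k b) = ∑ k ∈ K, c k * (∑ b, f b * V k b) := by
  simp_rw [Finset.mul_sum]
  rw [Finset.sum_comm]
  apply Finset.sum_congr rfl
  intro k _
  apply Finset.sum_congr rfl
  intro b _
  ring


lemma orth_expand {β ι : Type*} [Fintype β] [DecidableEq ι]
    (V : ι → β → ℝ) (μ : ι → ℝ)
    (horth : ∀ k l, ∑ b, V k b * V l b = if k = l then μ k else 0)
    (K : Finset ι) (c d : ι → ℝ) :
    ∑ b, (∑ k ∈ K, c k * V k b) * (∑ l ∈ K, d l * V l b) = ∑ k ∈ K, c k * d k * μ k := by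
  have step1 : ∀ b : β, (∑ k ∈ K, c k * V k b) * (∑ l ∈ K, d l * V l b) =
      ∑ k ∈ K, ∑ l ∈ K, (c k * d l) * (V k b * V l b) := by
    intro b
    rw [Finset.sum_mul_sum]
    apply Finset.sum_congr rfl
    intro k _
    apply Finset.sum_congr rfl
    intro l _
    ring
  simp only [step1]
  rw [Finset.sum_comm]
  apply Finset.sum_congr rfl
  intro k hk
  rw [Finset.sum_comm]
  have step2 : ∀ l ∈ K, ∑ b, c k * d l * (V k b * V l b) =
      c k * d l * (if k = l then μ k else 0) := by
    intro l _
    rw [← Finset.mul_sum, horth k l]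
  rw [Finset.sum_congr rfl step2]
  rw [Finset.sum_eq_single k]
  · rw [if_pos rfl]
  · intro l _ hlk
    rw [if_neg (fun h => hlk h.symm), mul_zero]
  · intro hkK
    exact absurd hk hkK

/-- Eckart–Young-type lower bound, in coefficient space. -/
lemma lower_core {N : ℕ} {n' : Type*} [Fintype n'] [DecidableEq n']
    (G H : Matrix (Fin N) n' ℝ) (lam : Fin N → ℝ) (r : ℕ)
    (hanti : Antitone lam) (hnn : ∀ i, 0 ≤ lam i)
    (horthG : ∀ i j, ∑ b, G i b * G j b = if i = j then lam i else 0)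
    (hrankH : H.rank ≤ r) :
    ∑ i ∈ Finset.univ.filter (fun i : Fin N => r ≤ i.val), lam i ≤
      ∑ i, ∑ b, (G i b - H i b) ^ 2 := by
  classical
  have hlamG : ∀ i, ∑ b, G i b ^ 2 = lam i := by
    intro i
    have := horthG i i
    simpa [sq] using this
  obtain ⟨N₂, W₂, ν, hW2tW2, hW2W2t, _, _, hdiag2, hzero2⟩ := exists_W Hᵀ
  have hrankHt : Hᵀ.rank ≤ r := by rw [Matrix.rank_transpose]; exact hrankH
  set C := H * W₂ᵀ with hC
  have hCt : W₂ * Hᵀ = Cᵀ := by rw [hC, Matrix.transpose_mul, Matrix.transpose_transpose]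
  have horthC : ∀ k l, (∑ i, C i k * C i l) = if k = l then ν k else 0 := by
    intro k l
    have h0 := congrFun (congrFun hdiag2 k) l
    rw [hCt] at h0
    simpa [Matrix.mul_apply, Matrix.transpose_apply, Matrix.diagonal_apply] using h0
  have hCzero : ∀ i k, r ≤ k.val → C i k = 0 := by
    intro i k hk
    have h0 : (∑ j, C j k * C j k) = 0 := by
      rw [horthC k k, if_pos rfl]
      exact hzero2 k (le_trans hrankHt hk)
    have h1 : ∀ j : Fin N, C j k * C j k = 0 := by
      intro j
      have := (Finset.sum_eq_zero_iff_of_nonneg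
        (fun j _ => mul_self_nonneg (C j k))).mp h0
      exact this j (Finset.mem_univ j)
    exact mul_self_eq_zero.mp (h1 i)
  have horthW2 : ∀ k l, (∑ b, W₂ k b * W₂ l b) = if k = l then (1:ℝ) else 0 := by
    intro k l
    have h0 := congrFun (congrFun hW2W2t k) l
    simpa [Matrix.mul_apply, Matrix.transpose_apply, Matrix.one_apply] using h0
  set Kr := Finset.univ.filter (fun k : Fin N₂ => k.val < r) with hKr
  have hHrow : ∀ i b, H i b = ∑ k ∈ Kr, C i k * W₂ k b := by
    intro i b
    have hCW : H = C * W₂ := by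
      rw [hC, Matrix.mul_assoc, hW2tW2, Matrix.mul_one]
    have h0 : H i b = ∑ k, C i k * W₂ k b := by
      rw [hCW]; rfl
    rw [h0, ← Finset.sum_filter_add_sum_filter_not Finset.univ
      (fun k : Fin N₂ => k.val < r) (fun k => C i k * W₂ k b)]
    have h1 : ∑ k ∈ Finset.univ.filter (fun k : Fin N₂ => ¬ k.val < r),
        C i k * W₂ k b = 0 := by
      apply Finset.sum_eq_zero
      intro k hkm
      rw [hCzero i k (le_of_not_gt (Finset.mem_filter.mp hkm).2), zero_mul]
    rw [h1, add_zero]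
  set bco : Fin N → Fin N₂ → ℝ := fun i k => ∑ b, G i b * W₂ k b with hbco
  set x : Fin N → ℝ := fun i => ∑ k ∈ Kr, (bco i k) ^ 2 with hx
  have hbco' : ∀ i k, bco i k = ∑ b, G i b * W₂ k b := fun _ _ => rfl
  have hx' : ∀ i, x i = ∑ k ∈ Kr, (bco i k) ^ 2 := fun _ => rfl
  have hx0 : ∀ i, 0 ≤ x i := fun i => Finset.sum_nonneg fun k _ => sq_nonneg _
  -- per-row inequality
  have hrow : ∀ i, lam i - x i ≤ ∑ b, (G i b - H i b) ^ 2 := by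
    intro i
    have hexp : ∑ b, (G i b - H i b) ^ 2 =
        lam i - 2 * (∑ k ∈ Kr, C i k * bco i k) + ∑ k ∈ Kr, C i k * C i k := by
      have e1 : ∀ b, (G i b - H i b) ^ 2 =
          G i b ^ 2 - 2 * (G i b * H i b) + H i b * H i b := by
        intro b; ring
      simp only [e1]
      rw [Finset.sum_add_distrib, Finset.sum_sub_distrib, ← Finset.mul_sum]
      congr 1
      · congr 1
        · exact hlamG i
        · congr 1
          simp only [hHrow]
          rw [cross_expand (fun b => G i b) (fun k b => W₂ k b) Kr (fun k => C i k)]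
      · simp only [hHrow]
        exact orth_expand (fun k b => W₂ k b) (fun _ => 1) horthW2 Kr
          (fun k => C i k) (fun k => C i k) |>.trans (by
            apply Finset.sum_congr rfl; intro k _; ring)
    rw [hexp]
    have hsq : 0 ≤ ∑ k ∈ Kr, (bco i k - C i k) ^ 2 :=
      Finset.sum_nonneg fun k _ => sq_nonneg _
    have hexpand : ∑ k ∈ Kr, (bco i k - C i k) ^ 2 =
        x i - 2 * (∑ k ∈ Kr, C i k * bco i k) + ∑ k ∈ Kr, C i k * C i k := by
      have e2 : ∀ k ∈ Kr, (bco i k - C i k) ^ 2 =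
          bco i k ^ 2 - 2 * (C i k * bco i k) + C i k * C i k := by
        intro k _; ring
      rw [hx' i, Finset.sum_congr rfl e2, Finset.sum_add_distrib, Finset.sum_sub_distrib,
        ← Finset.mul_sum]
    linarith
  -- Bessel: `x i ≤ lam i`
  have hxlam : ∀ i, x i ≤ lam i := by
    intro i
    have hsq : 0 ≤ ∑ b, (G i b - ∑ k ∈ Kr, bco i k * W₂ k b) ^ 2 :=
      Finset.sum_nonneg fun b _ => sq_nonneg _
    have hexp : ∑ b, (G i b - ∑ k ∈ Kr, bco i k * W₂ k b) ^ 2 = lam i - x i := by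
      have e1 : ∀ b, (G i b - ∑ k ∈ Kr, bco i k * W₂ k b) ^ 2 =
          G i b ^ 2 - 2 * (G i b * (∑ k ∈ Kr, bco i k * W₂ k b)) +
          (∑ k ∈ Kr, bco i k * W₂ k b) * (∑ l ∈ Kr, bco i l * W₂ l b) := by
        intro b; ring
      simp only [e1]
      rw [Finset.sum_add_distrib, Finset.sum_sub_distrib, ← Finset.mul_sum, hlamG i,
        cross_expand (fun b => G i b) (fun k b => W₂ k b) Kr (fun k => bco i k),
        orth_expand (fun k b => W₂ k b) (fun _ => 1) horthW2 Kr
          (fun k => bco i k) (fun k => bco i k)]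
      have e3 : ∑ k ∈ Kr, bco i k * (∑ b, G i b * W₂ k b) = x i := by
        rw [hx' i]
        apply Finset.sum_congr rfl
        intro k _
        rw [← hbco' i k]
        ring
      have e4 : ∑ k ∈ Kr, bco i k * bco i k * 1 = x i := by
        rw [hx' i]
        apply Finset.sum_congr rfl
        intro k _
        ring
      rw [e3, e4]
      ring
    linarith [hsq, hexp]
  -- the coefficients t i
  set t : Fin N → ℝ := fun i => if lam i = 0 then 0 else x i / lam i with ht
  have ht' : ∀ i, t i = if lam i = 0 then 0 else x i / lam i := fun _ => rfl
  have hGrow0 : ∀ i, lam i = 0 → ∀ b, G i b = 0 := by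
    intro i h0 b
    have h1 : ∑ b, G i b ^ 2 = 0 := by rw [hlamG i, h0]
    have := (Finset.sum_eq_zero_iff_of_nonneg (fun b _ => sq_nonneg (G i b))).mp h1
    exact pow_eq_zero_iff (n := 2) (by norm_num) |>.mp (this b (Finset.mem_univ b))
  have hxeq : ∀ i, x i = lam i * t i := by
    intro i
    rw [ht' i]
    by_cases h0 : lam i = 0
    · rw [if_pos h0, h0, zero_mul]
      apply Finset.sum_eq_zero
      intro k _
      have h7 : bco i k = 0 := by
        rw [hbco' i k]
        apply Finset.sum_eq_zero
        intro b _
        rw [hGrow0 i h0 b, zero_mul]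
      rw [h7, sq, zero_mul]
    · rw [if_neg h0, mul_div_cancel₀ _ h0]
  have ht0 : ∀ i, 0 ≤ t i := by
    intro i
    rw [ht' i]
    by_cases h0 : lam i = 0
    · rw [if_pos h0]
    · rw [if_neg h0]
      exact div_nonneg (hx0 i) (hnn i)
  have ht1 : ∀ i, t i ≤ 1 := by
    intro i
    rw [ht' i]
    by_cases h0 : lam i = 0
    · rw [if_pos h0]; norm_num
    · rw [if_neg h0]
      exact (div_le_one (lt_of_le_of_ne (hnn i) (Ne.symm h0))).mpr (hxlam i)
  -- `∑ t ≤ r` via Bessel for the `G` family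
  have hsumt : ∑ i, t i ≤ (r : ℝ) := by
    set F := Finset.univ.filter (fun i : Fin N => ¬ lam i = 0) with hF
    have ht2 : ∀ i, t i = ∑ k ∈ Kr, (if lam i = 0 then 0 else bco i k ^ 2 / lam i) := by
      intro i
      rw [ht' i]
      by_cases h0 : lam i = 0
      · rw [if_pos h0]
        symm
        apply Finset.sum_eq_zero
        intro k _
        rw [if_pos h0]
      · rw [if_neg h0, hx' i, Finset.sum_div]
        apply Finset.sum_congr rfl
        intro k _
        rw [if_neg h0]
    have hbessel2 : ∀ k : Fin N₂, ∑ i ∈ F, bco i k ^ 2 / lam i ≤ 1 := by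
      intro k
      have hsq : 0 ≤ ∑ b, (W₂ k b - ∑ i ∈ F, (bco i k / lam i) * G i b) ^ 2 :=
        Finset.sum_nonneg fun b _ => sq_nonneg _
      have hexp : ∑ b, (W₂ k b - ∑ i ∈ F, (bco i k / lam i) * G i b) ^ 2 =
          1 - ∑ i ∈ F, bco i k ^ 2 / lam i := by
        have e1 : ∀ b, (W₂ k b - ∑ i ∈ F, (bco i k / lam i) * G i b) ^ 2 =
            W₂ k b * W₂ k b - 2 * (W₂ k b * (∑ i ∈ F, (bco i k / lam i) * G i b)) +
            (∑ i ∈ F, (bco i k / lam i) * G i b) * (∑ j ∈ F, (bco j k / lam j) * G j b) := by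
          intro b; ring
        simp only [e1]
        rw [Finset.sum_add_distrib, Finset.sum_sub_distrib, ← Finset.mul_sum,
          horthW2 k k, if_pos rfl,
          cross_expand (fun b => W₂ k b) (fun i b => G i b) F (fun i => bco i k / lam i),
          orth_expand (fun i b => G i b) lam horthG F
            (fun i => bco i k / lam i) (fun i => bco i k / lam i)]
        have e3 : ∑ i ∈ F, (bco i k / lam i) * (∑ b, W₂ k b * G i b) =
            ∑ i ∈ F, bco i k ^ 2 / lam i := by
          apply Finset.sum_congr rfl
          intro i _
          have h6 : (∑ b, W₂ k b * G i b) = bco i k := by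
            rw [hbco' i k]
            apply Finset.sum_congr rfl
            intro b _
            ring
          rw [h6]
          ring
        have e4 : ∑ i ∈ F, (bco i k / lam i) * (bco i k / lam i) * lam i =
            ∑ i ∈ F, bco i k ^ 2 / lam i := by
          apply Finset.sum_congr rfl
          intro i hi
          have h0 : lam i ≠ 0 := (Finset.mem_filter.mp hi).2
          field_simp
        rw [e3, e4]
        ring
      linarith [hsq, hexp]
    calc ∑ i, t i = ∑ i : Fin N, ∑ k ∈ Kr, (if lam i = 0 then 0 else bco i k ^ 2 / lam i) := by
          exact Finset.sum_congr rfl fun i _ => ht2 i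
      _ = ∑ k ∈ Kr, ∑ i : Fin N, (if lam i = 0 then 0 else bco i k ^ 2 / lam i) :=
          Finset.sum_comm
      _ ≤ ∑ k ∈ Kr, (1:ℝ) := by
          apply Finset.sum_le_sum
          intro k _
          have e5 : ∑ i : Fin N, (if lam i = 0 then 0 else bco i k ^ 2 / lam i) =
              ∑ i ∈ F, bco i k ^ 2 / lam i := by
            rw [Finset.sum_filter]
            apply Finset.sum_congr rfl
            intro i _
            by_cases h0 : lam i = 0
            · rw [if_pos h0, if_neg (by simpa using h0)]
            · rw [if_neg h0, if_pos (by simpa using h0)]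
          rw [e5]
          exact hbessel2 k
      _ ≤ (r : ℝ) := by
          rw [Finset.sum_const, nsmul_eq_mul, mul_one]
          have : Kr.card ≤ r := card_filter_lt_le
          exact_mod_cast this
  -- put everything together
  have hky := kyfan lam t hanti hnn ht0 ht1 hsumt
  have hfinal : ∑ i, (lam i - x i) ≤ ∑ i, ∑ b, (G i b - H i b) ^ 2 :=
    Finset.sum_le_sum fun i _ => hrow i
  have hsplit := Finset.sum_filter_add_sum_filter_not Finset.univ
    (fun i : Fin N => i.val < r) lam
  have hcongr : Finset.univ.filter (fun i : Fin N => ¬ i.val < r) =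
      Finset.univ.filter (fun i : Fin N => r ≤ i.val) := by
    apply Finset.filter_congr
    intro i _
    simp [not_lt]
  have hxsum : ∑ i, x i ≤ ∑ i ∈ Finset.univ.filter (fun i : Fin N => i.val < r), lam i := by
    calc ∑ i, x i = ∑ i, lam i * t i := Finset.sum_congr rfl fun i _ => hxeq i
      _ ≤ _ := hky
  have hsum_split : ∑ i, (lam i - x i) = ∑ i, lam i - ∑ i, x i :=
    Finset.sum_sub_distrib _ _
  rw [hcongr] at hsplit
  linarith [hfinal, hxsum, hsum_split, hsplit]



lemma tailSq_le {I J : Type*} [Fintype I] [Fintype J] (M : Matrix I J ℝ) (k : ℕ)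
    (C : Matrix I J ℝ) (hC : C.rank ≤ k) : tailSq M k ≤ mfnormSq (M - C) := by
  apply csInf_le
  · exact ⟨0, fun x ⟨Cm, _, hx⟩ => hx ▸ mfnormSq_nonneg _⟩
  · exact ⟨C, hC, rfl⟩

lemma rank_cut_le {N : ℕ} {n' : Type*} [Fintype n'] (r' : ℕ)
    (M : Matrix (Fin N) n' ℝ) :
    (Matrix.diagonal (fun i : Fin N => if i.val < r' then (1:ℝ) else 0) * M).rank ≤ r' := by
  classical
  have e2 : (Matrix.diagonal (fun i : Fin N => if i.val < r' then (1:ℝ) else 0) * M).rank ≤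
      (Matrix.diagonal (fun i : Fin N => if i.val < r' then (1:ℝ) else 0)).rank :=
    Matrix.rank_mul_le_left _ _
  have e3 : (Matrix.diagonal (fun i : Fin N => if i.val < r' then (1:ℝ) else 0)).rank =
      Fintype.card {i : Fin N // (if i.val < r' then (1:ℝ) else 0) ≠ 0} :=
    Matrix.rank_diagonal _
  have e4 : Fintype.card {i : Fin N // (if i.val < r' then (1:ℝ) else 0) ≠ 0} =
      (Finset.univ.filter (fun i : Fin N => i.val < r')).card := by
    rw [Fintype.card_subtype]
    congr 1
    apply Finset.filter_congr
    intro i _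
    by_cases h : i.val < r' <;> simp [h]
  have e5 : (Finset.univ.filter (fun i : Fin N => i.val < r')).card ≤ r' :=
    card_filter_lt_le
  omega

/-- Core matrix lemma: approximation error of rank-`r'` truncation is controlled by the
distance to any rank-`r` matrix, when the matrix itself has rank at most `r''`. -/
lemma core_tailSq {m' n' : Type*} [Fintype m'] [Fintype n'] [DecidableEq m']
    (A B : Matrix m' n' ℝ) {r r' r'' : ℕ} (hA : A.rank ≤ r'') (hB : B.rank ≤ r)
    (h1 : r < r') (h2 : r' < r'') :
    tailSq A r' ≤ (((r'' : ℝ) - r') / ((r'' : ℝ) - r)) * mfnormSq (A - B) := by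
  classical
  obtain ⟨N, W, lam, hWtW, hWWt, hanti, hnn, hdiag, hzero⟩ := exists_W A
  set G := W * A with hG
  have horthG : ∀ i j, (∑ b, G i b * G j b) = if i = j then lam i else 0 := by
    intro i j
    have h0 := congrFun (congrFun hdiag i) j
    simpa [Matrix.mul_apply, Matrix.transpose_apply, Matrix.diagonal_apply] using h0
  have hlamG : ∀ i, ∑ b, G i b ^ 2 = lam i := by
    intro i
    have := horthG i i
    simpa [sq] using this
  -- upper bound by the tail of the eigenvalues
  have hupper : tailSq A r' ≤
      ∑ i ∈ Finset.univ.filter (fun i : Fin N => r' ≤ i.val), lam i := by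
    set D := Matrix.diagonal (fun i : Fin N => if i.val < r' then (1:ℝ) else 0) with hD
    set C := Wᵀ * (D * G) with hC
    have hrankC : C.rank ≤ r' :=
      le_trans (Matrix.rank_mul_le_right _ _) (rank_cut_le r' G)
    have hval : mfnormSq (A - C) =
        ∑ i ∈ Finset.univ.filter (fun i : Fin N => r' ≤ i.val), lam i := by
      have hWAC : W * (A - C) = G - D * G := by
        rw [Matrix.mul_sub]
        congr 1
        rw [hC, ← Matrix.mul_assoc, hWWt, Matrix.one_mul]
      rw [← mfnormSq_mul_of_orth hWtW (A - C), hWAC]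
      have hent : ∀ i b, (G - D * G) i b = if i.val < r' then 0 else G i b := by
        intro i b
        rw [Matrix.sub_apply, Matrix.diagonal_mul]
        by_cases h : i.val < r'
        · rw [if_pos h, if_pos h, one_mul, sub_self]
        · rw [if_neg h, if_neg h, zero_mul, sub_zero]
      have hper : ∀ i : Fin N, (∑ b, ((G - D * G) i b) ^ 2) =
          if r' ≤ i.val then lam i else 0 := by
        intro i
        by_cases h : i.val < r'
        · rw [if_neg (by omega)]
          apply Finset.sum_eq_zero
          intro b _
          rw [hent i b, if_pos h]
          norm_num
        · rw [if_pos (by omega), ← hlamG i]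
          apply Finset.sum_congr rfl
          intro b _
          rw [hent i b, if_neg h]
      calc mfnormSq (G - D * G) = ∑ i : Fin N, ∑ b, ((G - D * G) i b) ^ 2 := rfl
        _ = ∑ i : Fin N, (if r' ≤ i.val then lam i else 0) :=
            Finset.sum_congr rfl fun i _ => hper i
        _ = ∑ i ∈ Finset.univ.filter (fun i : Fin N => r' ≤ i.val), lam i :=
            (Finset.sum_filter _ _).symm
    rw [← hval]
    exact tailSq_le A r' C hrankC
  -- lower bound for `mfnormSq (A - B)`
  have hlower : (∑ i ∈ Finset.univ.filter (fun i : Fin N => r ≤ i.val), lam i) ≤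
      mfnormSq (A - B) := by
    set H := W * B with hH
    have hrankH : H.rank ≤ r := le_trans (Matrix.rank_mul_le_right _ _) hB
    have hGH : mfnormSq (A - B) = ∑ i : Fin N, ∑ b, (G i b - H i b) ^ 2 := by
      rw [← mfnormSq_mul_of_orth hWtW (A - B), Matrix.mul_sub]
      rfl
    rw [hGH]
    exact lower_core G H lam r hanti hnn horthG hrankH
  -- combine
  have hmid := sorted_tail_le lam hanti hnn (fun i hi => hzero i (le_trans hA hi)) h1 h2
  have hc1 : (r : ℝ) < r' := by exact_mod_cast h1
  have hc2 : (r' : ℝ) < r'' := by exact_mod_cast h2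
  have hden : (0:ℝ) < (r'' : ℝ) - r := by linarith
  rw [div_mul_eq_mul_div, le_div_iff₀ hden]
  have hT1 : 0 ≤ ∑ i ∈ Finset.univ.filter (fun i : Fin N => r' ≤ i.val), lam i :=
    Finset.sum_nonneg fun i _ => hnn i
  nlinarith [mul_le_mul_of_nonneg_right hupper (le_of_lt hden),
    mul_le_mul_of_nonneg_right hlower (by linarith : (0:ℝ) ≤ (r'' : ℝ) - r')]

/-- Any Frobenius-norm minimizer over matrices of rank at most `k` is a left
multiple of the target. -/
lemma exists_left_factor {m' n' : Type*} [Fintype m'] [Fintype n'] [DecidableEq m']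
    (M Z : Matrix m' n' ℝ) (k : ℕ) (hZ : Z.rank ≤ k)
    (hmin : ∀ Wm : Matrix m' n' ℝ, Wm.rank ≤ k →
      mfnormSq (Z - M) ≤ mfnormSq (Wm - M)) :
    ∃ P : Matrix m' m' ℝ, Z = P * M := by
  classical
  obtain ⟨N, W, ν, hWtW, hWWt, _, _, hdiag, hzero⟩ := exists_W Z
  set D := Matrix.diagonal (fun i : Fin N => if i.val < k then (1:ℝ) else 0) with hD
  have hWZzero : ∀ (i : Fin N) b, k ≤ i.val → (W * Z) i b = 0 := by
    intro i b hik
    have h0 : (∑ c, (W * Z) i c * (W * Z) i c) = 0 := by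
      have h1 := congrFun (congrFun hdiag i) i
      rw [Matrix.mul_apply] at h1
      simp only [Matrix.transpose_apply, Matrix.diagonal_apply_eq] at h1
      rw [h1]
      exact hzero i (le_trans hZ hik)
    have h2 := (Finset.sum_eq_zero_iff_of_nonneg
      (fun c _ => mul_self_nonneg ((W * Z) i c))).mp h0
    exact mul_self_eq_zero.mp (h2 b (Finset.mem_univ b))
  set C := Wᵀ * (D * (W * M)) with hC
  have hrankC : C.rank ≤ k :=
    le_trans (Matrix.rank_mul_le_right _ _) (rank_cut_le k (W * M))
  have hWC : W * C = D * (W * M) := by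
    rw [hC, ← Matrix.mul_assoc, hWWt, Matrix.one_mul]
  have hZM : mfnormSq (Z - M) =
      ∑ i : Fin N, ∑ b, ((W * Z) i b - (W * M) i b) ^ 2 := by
    rw [← mfnormSq_mul_of_orth hWtW (Z - M), Matrix.mul_sub]
    rfl
  have hCMent : ∀ (i : Fin N) b, ((D * (W * M)) i b - (W * M) i b) ^ 2 =
      if i.val < k then 0 else ((W * Z) i b - (W * M) i b) ^ 2 := by
    intro i b
    rw [Matrix.diagonal_mul]
    by_cases h : i.val < k
    · rw [if_pos h, if_pos h, one_mul, sub_self]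
      norm_num
    · rw [if_neg h, if_neg h, zero_mul, hWZzero i b (le_of_not_gt h)]
  have hCM : mfnormSq (C - M) = ∑ i ∈ Finset.univ.filter (fun i : Fin N => ¬ i.val < k),
      ∑ b, ((W * Z) i b - (W * M) i b) ^ 2 := by
    have h0 : mfnormSq (C - M) = ∑ i : Fin N, ∑ b, ((D * (W * M)) i b - (W * M) i b) ^ 2 := by
      rw [← mfnormSq_mul_of_orth hWtW (C - M), Matrix.mul_sub, hWC]
      rfl
    rw [h0]
    have h1 : ∀ i : Fin N, (∑ b, ((D * (W * M)) i b - (W * M) i b) ^ 2) =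
        if ¬ i.val < k then ∑ b, ((W * Z) i b - (W * M) i b) ^ 2 else 0 := by
      intro i
      by_cases h : i.val < k
      · rw [if_neg (not_not_intro h)]
        apply Finset.sum_eq_zero
        intro b _
        rw [hCMent i b, if_pos h]
      · rw [if_pos h]
        apply Finset.sum_congr rfl
        intro b _
        rw [hCMent i b, if_neg h]
    rw [Finset.sum_congr rfl fun i _ => h1 i, ← Finset.sum_filter]
  have hkey := hmin C hrankC
  have hsplit := Finset.sum_filter_add_sum_filter_not Finset.univ
    (fun i : Fin N => i.val < k)
    (fun i => ∑ b, ((W * Z) i b - (W * M) i b) ^ 2)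
  have hheadzero : ∑ i ∈ Finset.univ.filter (fun i : Fin N => i.val < k),
      ∑ b, ((W * Z) i b - (W * M) i b) ^ 2 = 0 := by
    have hle : ∑ i ∈ Finset.univ.filter (fun i : Fin N => i.val < k),
        ∑ b, ((W * Z) i b - (W * M) i b) ^ 2 ≤ 0 := by
      rw [hZM, hCM] at hkey
      linarith [hsplit]
    have hge : 0 ≤ ∑ i ∈ Finset.univ.filter (fun i : Fin N => i.val < k),
        ∑ b, ((W * Z) i b - (W * M) i b) ^ 2 :=
      Finset.sum_nonneg fun i _ => Finset.sum_nonneg fun b _ => sq_nonneg _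
    linarith
  have hent0 : ∀ i : Fin N, i.val < k → ∀ b, (W * Z) i b = (W * M) i b := by
    intro i hik b
    have h2 := (Finset.sum_eq_zero_iff_of_nonneg
      (fun i _ => Finset.sum_nonneg fun b _ => sq_nonneg
        ((W * Z) i b - (W * M) i b))).mp hheadzero i
      (Finset.mem_filter.mpr ⟨Finset.mem_univ _, hik⟩)
    have h3 := (Finset.sum_eq_zero_iff_of_nonneg
      (fun b _ => sq_nonneg ((W * Z) i b - (W * M) i b))).mp h2 b (Finset.mem_univ b)
    have h4 := (pow_eq_zero_iff (n := 2) two_ne_zero).mp h3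
    linarith [sub_eq_zero.mp h4]
  have hWZeq : W * Z = D * (W * M) := by
    ext i b
    rw [Matrix.diagonal_mul]
    by_cases h : i.val < k
    · rw [if_pos h, one_mul]
      exact hent0 i h b
    · rw [if_neg h, zero_mul]
      exact hWZzero i b (le_of_not_gt h)
  refine ⟨Wᵀ * (D * W), ?_⟩
  calc Z = (Wᵀ * W) * Z := by rw [hWtW, Matrix.one_mul]
    _ = Wᵀ * (W * Z) := by rw [Matrix.mul_assoc]
    _ = Wᵀ * (D * (W * M)) := by rw [hWZeq]
    _ = Wᵀ * (D * W) * M := by rw [Matrix.mul_assoc, Matrix.mul_assoc]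





section TensorPlumb

variable {d : ℕ} (p : Fin d → ℕ)

/-- Merge a row index and column index of the `k`-th matricization into a tensor index. -/
def mrg (k : ℕ) (a : (j : {j : Fin d // j.val < k}) → Fin (p j.1))
    (b : (j : {j : Fin d // ¬ j.val < k}) → Fin (p j.1)) : (j : Fin d) → Fin (p j) :=
  fun j => if h : j.val < k then a ⟨j, h⟩ else b ⟨j, h⟩

lemma seqMat_apply (k : ℕ) (X : Tensor p) (a) (b) :
    seqMat p k X a b = X (mrg p k a b) := rfl

def rowOf (k : ℕ) (i : (j : Fin d) → Fin (p j)) :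
    (j : {j : Fin d // j.val < k}) → Fin (p j.1) := fun j => i j.1

def colOf (k : ℕ) (i : (j : Fin d) → Fin (p j)) :
    (j : {j : Fin d // ¬ j.val < k}) → Fin (p j.1) := fun j => i j.1

lemma mrg_row_col (k : ℕ) (i : (j : Fin d) → Fin (p j)) :
    mrg p k (rowOf p k i) (colOf p k i) = i := by
  funext j
  unfold mrg rowOf colOf
  by_cases h : j.val < k
  · rw [dif_pos h]
  · rw [dif_neg h]

lemma rowOf_mrg (k : ℕ) (a) (b) : rowOf p k (mrg p k a b) = a := by
  funext s
  show mrg p k a b s.1 = a s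
  unfold mrg
  rw [dif_pos s.2]

lemma colOf_mrg (k : ℕ) (a) (b) : colOf p k (mrg p k a b) = b := by
  funext s
  show mrg p k a b s.1 = b s
  unfold mrg
  rw [dif_neg s.2]

def idxEquiv (k : ℕ) : ((j : Fin d) → Fin (p j)) ≃
    ((j : {j : Fin d // j.val < k}) → Fin (p j.1)) ×
    ((j : {j : Fin d // ¬ j.val < k}) → Fin (p j.1)) where
  toFun i := (rowOf p k i, colOf p k i)
  invFun q := mrg p k q.1 q.2
  left_inv i := mrg_row_col p k i
  right_inv q := Prod.ext (rowOf_mrg p k q.1 q.2) (colOf_mrg p k q.1 q.2)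

lemma sum_tensor (k : ℕ) (f : ((j : Fin d) → Fin (p j)) → ℝ) :
    ∑ i, f i = ∑ a, ∑ b, f (mrg p k a b) := by
  calc ∑ i, f i = ∑ q : _ × _, f (mrg p k q.1 q.2) :=
        (Fintype.sum_bijective (idxEquiv p k).symm (idxEquiv p k).symm.bijective _ _
          (fun q => rfl)).symm
    _ = ∑ a, ∑ b, f (mrg p k a b) := Fintype.sum_prod_type _

lemma sumsq_eq_mfnormSq (k : ℕ) (X : Tensor p) :
    ∑ i, X i ^ 2 = mfnormSq (seqMat p k X) := by
  rw [sum_tensor p k]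
  rfl

def fromMat (k : ℕ)
    (M : Matrix ((j : {j : Fin d // j.val < k}) → Fin (p j.1))
      ((j : {j : Fin d // ¬ j.val < k}) → Fin (p j.1)) ℝ) : Tensor p :=
  fun i => M (rowOf p k i) (colOf p k i)

lemma seqMat_fromMat (k : ℕ) (M) : seqMat p k (fromMat p k M) = M := by
  ext a b
  show M (rowOf p k (mrg p k a b)) (colOf p k (mrg p k a b)) = M a b
  rw [rowOf_mrg, colOf_mrg]

lemma seqMat_sub (k : ℕ) (X Y : Tensor p) :
    seqMat p k (X - Y) = seqMat p k X - seqMat p k Y := rfl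

lemma fnorm_eq_sqrt_mfnormSq (k : ℕ) (X : Tensor p) :
    fnorm X = Real.sqrt (mfnormSq (seqMat p k X)) := by
  rw [fnorm, sumsq_eq_mfnormSq p k]

variable {p} in
private def resRow {k j : ℕ} (hkj : k ≤ j)
    (a : (s : {s : Fin d // s.val < j}) → Fin (p s.1)) :
    (s : {s : Fin d // s.val < k}) → Fin (p s.1) :=
  fun s => a ⟨s.1, lt_of_lt_of_le s.2 hkj⟩

variable {p} in
private def midOf {k j : ℕ}
    (a : (s : {s : Fin d // s.val < j}) → Fin (p s.1)) :
    (s : {s : Fin d // s.val < j ∧ ¬ s.val < k}) → Fin (p s.1) :=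
  fun s => a ⟨s.1, s.2.1⟩

variable {p} in
private def cmbOf {k j : ℕ}
    (u : (s : {s : Fin d // s.val < k}) → Fin (p s.1))
    (mv : (s : {s : Fin d // s.val < j ∧ ¬ s.val < k}) → Fin (p s.1)) :
    (s : {s : Fin d // s.val < j}) → Fin (p s.1) :=
  fun s => if h : s.1.val < k then u ⟨s.1, h⟩ else mv ⟨s.1, ⟨s.2, h⟩⟩

private lemma resRow_cmb {k j : ℕ} (hkj : k ≤ j) (u) (mv) :
    resRow (p := p) hkj (cmbOf (k := k) (j := j) u mv) = u := by
  funext s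
  show cmbOf u mv ⟨s.1, _⟩ = u s
  exact dif_pos s.2

private lemma midOf_cmb {k j : ℕ} (u) (mv) :
    midOf (cmbOf (p := p) (k := k) (j := j) u mv) = mv := by
  funext s
  show cmbOf u mv ⟨s.1, _⟩ = mv s
  exact dif_neg s.2.2

private lemma cmb_res_mid {k j : ℕ} (hkj : k ≤ j) (a) :
    cmbOf (resRow (p := p) hkj a) (midOf (k := k) a) = a := by
  funext s
  by_cases h : s.1.val < k
  · exact dif_pos h
  · exact dif_neg h

/-- Propagation of a left-factor identity from matricization `k` to `j ≥ k`. -/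
lemma seqMat_propagate {k j : ℕ} (hkj : k ≤ j) (A B : Tensor p)
    (P : Matrix ((s : {s : Fin d // s.val < k}) → Fin (p s.1))
      ((s : {s : Fin d // s.val < k}) → Fin (p s.1)) ℝ)
    (hP : seqMat p k B = P * seqMat p k A) :
    ∃ Q, seqMat p j B = Q * seqMat p j A := by
  classical
  set Q : Matrix ((s : {s : Fin d // s.val < j}) → Fin (p s.1))
      ((s : {s : Fin d // s.val < j}) → Fin (p s.1)) ℝ :=
    fun a a' => P (resRow hkj a) (resRow hkj a') *
      (if midOf (k := k) a' = midOf (k := k) a then 1 else 0) with hQ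
  have hQ' : ∀ a a', Q a a' = P (resRow hkj a) (resRow hkj a') *
      (if midOf (k := k) a' = midOf (k := k) a then 1 else 0) := fun _ _ => rfl
  refine ⟨Q, ?_⟩
  ext a b
  have hrow : rowOf p k (mrg p j a b) = resRow hkj a := by
    funext s
    show mrg p j a b s.1 = resRow hkj a s
    unfold mrg
    rw [dif_pos (lt_of_lt_of_le s.2 hkj)]
    rfl
  have hmrg : ∀ u, mrg p k u (colOf p k (mrg p j a b)) =
      mrg p j (cmbOf u (midOf (k := k) a)) b := by
    intro u
    funext s
    unfold mrg colOf
    by_cases h1 : s.val < k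
    · rw [dif_pos h1, dif_pos (lt_of_lt_of_le h1 hkj)]
      unfold cmbOf
      rw [dif_pos h1]
    · rw [dif_neg h1]
      show mrg p j a b s = _
      unfold mrg
      by_cases h2 : s.val < j
      · rw [dif_pos h2, dif_pos h2]
        unfold cmbOf
        rw [dif_neg h1]
        rfl
      · rw [dif_neg h2, dif_neg h2]
  have lhs : seqMat p j B a b =
      ∑ u, P (resRow hkj a) u * seqMat p k A u (colOf p k (mrg p j a b)) := by
    rw [seqMat_apply]
    have h0 : B (mrg p j a b) =
        seqMat p k B (rowOf p k (mrg p j a b)) (colOf p k (mrg p j a b)) := by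
      rw [seqMat_apply, mrg_row_col]
    rw [h0, hP, Matrix.mul_apply, hrow]
  rw [lhs]; show _ = ∑ u, Q a u * seqMat p j A u b
  have hbij : Function.Bijective
      (fun q : ((s : {s : Fin d // s.val < k}) → Fin (p s.1)) ×
        ((s : {s : Fin d // s.val < j ∧ ¬ s.val < k}) → Fin (p s.1)) =>
        cmbOf q.1 q.2) := by
    constructor
    · intro q q' hqq'
      have hqq2 : cmbOf (p := p) (k := k) (j := j) q.1 q.2 = cmbOf q'.1 q'.2 := hqq'
      have h1 := congrArg (resRow (p := p) hkj) hqq2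
      have h2 := congrArg (midOf (p := p) (k := k)) hqq2
      rw [resRow_cmb, resRow_cmb] at h1
      rw [midOf_cmb, midOf_cmb] at h2
      exact Prod.ext h1 h2
    · intro a'
      exact ⟨(resRow hkj a', midOf (k := k) a'), cmb_res_mid p hkj a'⟩
  have rhs : ∑ a', Q a a' * seqMat p j A a' b =
      ∑ u, P (resRow hkj a) u * seqMat p j A (cmbOf u (midOf (k := k) a)) b := by
    rw [(Fintype.sum_bijective _ hbij
      (fun q => Q a (cmbOf q.1 q.2) * seqMat p j A (cmbOf q.1 q.2) b)
      (fun a' => Q a a' * seqMat p j A a' b) (fun q => rfl)).symm]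
    rw [Fintype.sum_prod_type]
    apply Finset.sum_congr rfl
    intro u _
    have hterm : ∀ mv, Q a (cmbOf u mv) * seqMat p j A (cmbOf u mv) b =
        if mv = midOf (k := k) a then
          P (resRow hkj a) u * seqMat p j A (cmbOf u mv) b else 0 := by
      intro mv
      rw [hQ' a (cmbOf u mv), resRow_cmb, midOf_cmb]
      by_cases h : mv = midOf (k := k) a
      · rw [if_pos h, if_pos h, mul_one]
      · rw [if_neg h, if_neg h, mul_zero, zero_mul]
    calc ∑ mv, Q a (cmbOf u mv) * seqMat p j A (cmbOf u mv) b
        = ∑ mv, if mv = midOf (k := k) a then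
            P (resRow hkj a) u * seqMat p j A (cmbOf u mv) b else 0 :=
          Finset.sum_congr rfl fun mv _ => hterm mv
      _ = ∑ mv, if mv = midOf (k := k) a then
            P (resRow hkj a) u * seqMat p j A (cmbOf u (midOf (k := k) a)) b else 0 := by
          apply Finset.sum_congr rfl
          intro mv _
          by_cases h : mv = midOf (k := k) a
          · rw [if_pos h, if_pos h, h]
          · rw [if_neg h, if_neg h]
      _ = P (resRow hkj a) u * seqMat p j A (cmbOf u (midOf (k := k) a)) b := by
          rw [Finset.sum_ite_eq' Finset.univ (midOf (k := k) a)
            (fun _ => P (resRow hkj a) u * seqMat p j A (cmbOf u (midOf (k := k) a)) b)]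
          rw [if_pos (Finset.mem_univ _)]
  rw [rhs]
  apply Finset.sum_congr rfl
  intro u _
  congr 1
  rw [seqMat_apply, seqMat_apply, hmrg u]

lemma fnorm_nonneg (X : Tensor p) : 0 ≤ fnorm X := Real.sqrt_nonneg _

lemma fnorm_sub_comm (U V : Tensor p) : fnorm (U - V) = fnorm (V - U) := by
  unfold fnorm
  congr 1
  apply Finset.sum_congr rfl
  intro i _
  rw [Pi.sub_apply, Pi.sub_apply]
  ring

lemma fnorm_eq_norm (T : Tensor p) :
    fnorm T = ‖(WithLp.toLp 2 T : EuclideanSpace ℝ ((k : Fin d) → Fin (p k)))‖ := by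
  rw [EuclideanSpace.norm_eq, fnorm]
  congr 1
  apply Finset.sum_congr rfl
  intro i _
  rw [Real.norm_eq_abs, sq_abs]

lemma fnorm_triangle (U V W : Tensor p) :
    fnorm (U - W) ≤ fnorm (U - V) + fnorm (V - W) := by
  rw [fnorm_eq_norm p (U - W), fnorm_eq_norm p (U - V), fnorm_eq_norm p (V - W)]
  set u : EuclideanSpace ℝ ((k : Fin d) → Fin (p k)) := WithLp.toLp 2 U
  set v : EuclideanSpace ℝ ((k : Fin d) → Fin (p k)) := WithLp.toLp 2 V
  set w : EuclideanSpace ℝ ((k : Fin d) → Fin (p k)) := WithLp.toLp 2 W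
  have h1 : (WithLp.toLp 2 (U - W) : EuclideanSpace ℝ ((k : Fin d) → Fin (p k))) = u - w := rfl
  have h2 : (WithLp.toLp 2 (U - V) : EuclideanSpace ℝ ((k : Fin d) → Fin (p k))) = u - v := rfl
  have h3 : (WithLp.toLp 2 (V - W) : EuclideanSpace ℝ ((k : Fin d) → Fin (p k))) = v - w := rfl
  rw [h1, h2, h3]
  calc ‖u - w‖ = ‖(u - v) + (v - w)‖ := by rw [sub_add_sub_cancel]
    _ ≤ ‖u - v‖ + ‖v - w‖ := norm_add_le _ _

end TensorPlumb

lemma le_of_sqrt_le {x y : ℝ} (hx : 0 ≤ x) (hy : 0 ≤ y)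
    (h : Real.sqrt x ≤ Real.sqrt y) : x ≤ y := by
  nlinarith [Real.sq_sqrt hx, Real.sq_sqrt hy, Real.sqrt_nonneg x, Real.sqrt_nonneg y]

lemma mfnormSq_sub_comm {I J : Type*} [Fintype I] [Fintype J] (A B : Matrix I J ℝ) :
    mfnormSq (A - B) = mfnormSq (B - A) := by
  unfold mfnormSq
  apply Finset.sum_congr rfl
  intro i _
  apply Finset.sum_congr rfl
  intro j _
  rw [Matrix.sub_apply, Matrix.sub_apply]
  ring

/-- **Lemma A.5 (contractive projection property).** Let `Θ(r_1,…,r_{d−1})` be the set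
of tensors in `ℝ^{p_1×⋯×p_d}` whose `j`-th sequential matricization has rank at most
`r_j` for all `j`.  Suppose `X ∈ Θ(r'')`, `Y ∈ Θ(r)`, `r_i < r_i' < r_i''` for all
`i`, and the approximate projection of `X` onto `Θ(r')` is computed by the sequence
`Xs 0 = X`, where for `j = 1,…,d−1` the tensor `Xs j` is a best approximation of
`Xs (j−1)` among tensors whose `j`-th sequential matricization has rank at most `r_j'`
(as given by the truncated SVD).  Then
`‖Xs (d−1) − X‖_F ≤ (∏_{i=1}^{d−1}(β_i+1) − 1)·‖Y − X‖_F` with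
`β_i = √((r_i''−r_i')/(r_i''−r_i))`. -/
theorem statement11 {d : ℕ} (p : Fin d → ℕ)
    (rk rk' rk'' : ℕ → ℕ)
    (hlt : ∀ i, 1 ≤ i → i ≤ d - 1 → rk i < rk' i ∧ rk' i < rk'' i)
    (X Y : Tensor p)
    (hX : ∀ i, 1 ≤ i → i ≤ d - 1 → Matrix.rank (seqMat p i X) ≤ rk'' i)
    (hY : ∀ i, 1 ≤ i → i ≤ d - 1 → Matrix.rank (seqMat p i Y) ≤ rk i)
    (Xs : ℕ → Tensor p) (h0 : Xs 0 = X)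
    (hproj : ∀ j, 1 ≤ j → j ≤ d - 1 →
      Matrix.rank (seqMat p j (Xs j)) ≤ rk' j ∧
      ∀ Z : Tensor p, Matrix.rank (seqMat p j Z) ≤ rk' j →
        fnorm (Xs j - Xs (j - 1)) ≤ fnorm (Z - Xs (j - 1))) :
    fnorm (Xs (d - 1) - X) ≤
      ((∏ i ∈ Finset.Icc 1 (d - 1),
          (Real.sqrt (((rk'' i : ℝ) - rk' i) / ((rk'' i : ℝ) - rk i)) + 1)) - 1) *
        fnorm (Y - X) := by
  classical
  set β : ℕ → ℝ := fun i => Real.sqrt (((rk'' i : ℝ) - rk' i) / ((rk'' i : ℝ) - rk i))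
    with hβ
  have hβ' : ∀ i, β i = Real.sqrt (((rk'' i : ℝ) - rk' i) / ((rk'' i : ℝ) - rk i)) :=
    fun _ => rfl
  -- every projection step is a left multiplication on the matricization
  have hstruct : ∀ t, 1 ≤ t → t ≤ d - 1 →
      ∃ P : Matrix ((s : {s : Fin d // s.val < t}) → Fin (p s.1))
        ((s : {s : Fin d // s.val < t}) → Fin (p s.1)) ℝ,
        seqMat p t (Xs t) = P * seqMat p t (Xs (t - 1)) := by
    intro t h1 h2
    obtain ⟨hrkZ, hbest⟩ := hproj t h1 h2
    apply exists_left_factor (seqMat p t (Xs (t - 1))) (seqMat p t (Xs t)) (rk' t) hrkZ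
    intro Wm hWm
    have hb := hbest (fromMat p t Wm) (by rw [seqMat_fromMat]; exact hWm)
    have e1 : fnorm (Xs t - Xs (t - 1)) =
        Real.sqrt (mfnormSq (seqMat p t (Xs t) - seqMat p t (Xs (t - 1)))) := by
      rw [fnorm_eq_sqrt_mfnormSq p t, seqMat_sub]
    have e2 : fnorm (fromMat p t Wm - Xs (t - 1)) =
        Real.sqrt (mfnormSq (Wm - seqMat p t (Xs (t - 1)))) := by
      rw [fnorm_eq_sqrt_mfnormSq p t, seqMat_sub, seqMat_fromMat]
    rw [e1, e2] at hb
    exact le_of_sqrt_le (mfnormSq_nonneg _) (mfnormSq_nonneg _) hb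
  -- rank of later matricizations never increases along the sweep
  have hchain : ∀ t j, t ≤ j → 1 ≤ j → j ≤ d - 1 →
      (seqMat p j (Xs t)).rank ≤ rk'' j := by
    intro t
    induction t with
    | zero =>
      intro j _ h1j hjd
      rw [h0]
      exact hX j h1j hjd
    | succ t ih =>
      intro j htj h1j hjd
      obtain ⟨P, hP⟩ := hstruct (t + 1) (Nat.succ_le_succ (Nat.zero_le t))
        (le_trans htj hjd)
      have ht1 : t + 1 - 1 = t := rfl
      rw [ht1] at hP
      obtain ⟨Q, hQ⟩ := seqMat_propagate p htj (Xs t) (Xs (t + 1)) P hP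
      rw [hQ]
      exact le_trans (Matrix.rank_mul_le_right _ _)
        (ih j (le_trans (Nat.le_succ t) htj) h1j hjd)
  -- main induction on the sweep
  have main : ∀ j, j ≤ d - 1 → fnorm (Xs j - X) ≤
      ((∏ i ∈ Finset.Icc 1 j, (β i + 1)) - 1) * fnorm (Y - X) := by
    intro j
    induction j with
    | zero =>
      intro _
      rw [h0]
      have hf0 : fnorm (X - X : Tensor p) = 0 := by
        have hs : ∑ i, ((X - X : Tensor p) i) ^ 2 = 0 :=
          Finset.sum_eq_zero fun i _ => by rw [Pi.sub_apply, sub_self]; norm_num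
        rw [fnorm, hs, Real.sqrt_zero]
      rw [hf0, show Finset.Icc 1 0 = (∅ : Finset ℕ) from Finset.Icc_eq_empty (by omega),
        Finset.prod_empty]
      norm_num
    | succ j ih =>
      intro hj1
      have hjd : j ≤ d - 1 := le_trans (Nat.le_succ j) hj1
      have IH := ih hjd
      have h1j1 : 1 ≤ j + 1 := by omega
      obtain ⟨hlt1, hlt2⟩ := hlt (j + 1) h1j1 hj1
      have hrkM : (seqMat p (j + 1) (Xs j)).rank ≤ rk'' (j + 1) :=
        hchain j (j + 1) (Nat.le_succ j) h1j1 hj1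
      have hrkY : (seqMat p (j + 1) Y).rank ≤ rk (j + 1) := hY (j + 1) h1j1 hj1
      have hcore := core_tailSq (seqMat p (j + 1) (Xs j)) (seqMat p (j + 1) Y)
        hrkM hrkY hlt1 hlt2
      have hZM : mfnormSq (seqMat p (j + 1) (Xs (j + 1)) - seqMat p (j + 1) (Xs j)) ≤
          tailSq (seqMat p (j + 1) (Xs j)) (rk' (j + 1)) := by
        apply le_csInf
        · exact ⟨mfnormSq (seqMat p (j + 1) (Xs j) - 0), 0,
            by rw [Matrix.rank_zero]; exact Nat.zero_le _, rfl⟩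
        · rintro x ⟨C, hC, rfl⟩
          obtain ⟨_, hbest⟩ := hproj (j + 1) h1j1 hj1
          have hb := hbest (fromMat p (j + 1) C) (by rw [seqMat_fromMat]; exact hC)
          have hsub1 : j + 1 - 1 = j := rfl
          rw [hsub1] at hb
          have e1 : fnorm (Xs (j + 1) - Xs j) =
              Real.sqrt (mfnormSq (seqMat p (j + 1) (Xs (j + 1)) - seqMat p (j + 1) (Xs j))) := by
            rw [fnorm_eq_sqrt_mfnormSq p (j + 1), seqMat_sub]
          have e2 : fnorm (fromMat p (j + 1) C - Xs j) =
              Real.sqrt (mfnormSq (C - seqMat p (j + 1) (Xs j))) := by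
            rw [fnorm_eq_sqrt_mfnormSq p (j + 1), seqMat_sub, seqMat_fromMat]
          rw [e1, e2] at hb
          have := le_of_sqrt_le (mfnormSq_nonneg _) (mfnormSq_nonneg _) hb
          rw [mfnormSq_sub_comm C (seqMat p (j + 1) (Xs j))] at this
          exact this
      have hq0 : 0 ≤ ((rk'' (j + 1) : ℝ) - rk' (j + 1)) / ((rk'' (j + 1) : ℝ) - rk (j + 1)) := by
        have c1 : (rk (j + 1) : ℝ) < rk' (j + 1) := by exact_mod_cast hlt1
        have c2 : (rk' (j + 1) : ℝ) < rk'' (j + 1) := by exact_mod_cast hlt2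
        apply div_nonneg <;> linarith
      have hstep : fnorm (Xs (j + 1) - Xs j) ≤ β (j + 1) * fnorm (Xs j - Y) := by
        have e1 : fnorm (Xs (j + 1) - Xs j) =
            Real.sqrt (mfnormSq (seqMat p (j + 1) (Xs (j + 1)) - seqMat p (j + 1) (Xs j))) := by
          rw [fnorm_eq_sqrt_mfnormSq p (j + 1), seqMat_sub]
        have e3 : fnorm (Xs j - Y) =
            Real.sqrt (mfnormSq (seqMat p (j + 1) (Xs j) - seqMat p (j + 1) Y)) := by
          rw [fnorm_eq_sqrt_mfnormSq p (j + 1), seqMat_sub]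
        rw [e1, e3, hβ' (j + 1)]
        calc Real.sqrt (mfnormSq (seqMat p (j + 1) (Xs (j + 1)) - seqMat p (j + 1) (Xs j)))
            ≤ Real.sqrt ((((rk'' (j + 1) : ℝ) - rk' (j + 1)) / ((rk'' (j + 1) : ℝ) - rk (j + 1))) *
              mfnormSq (seqMat p (j + 1) (Xs j) - seqMat p (j + 1) Y)) :=
              Real.sqrt_le_sqrt (le_trans hZM hcore)
          _ = Real.sqrt (((rk'' (j + 1) : ℝ) - rk' (j + 1)) / ((rk'' (j + 1) : ℝ) - rk (j + 1))) *
              Real.sqrt (mfnormSq (seqMat p (j + 1) (Xs j) - seqMat p (j + 1) Y)) :=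
              Real.sqrt_mul hq0 _
      have htri1 : fnorm (Xs (j + 1) - X) ≤ fnorm (Xs (j + 1) - Xs j) + fnorm (Xs j - X) :=
        fnorm_triangle p _ _ _
      have htri2 : fnorm (Xs j - Y) ≤ fnorm (Xs j - X) + fnorm (X - Y) :=
        fnorm_triangle p _ _ _
      have hXY : fnorm (X - Y : Tensor p) = fnorm (Y - X) := fnorm_sub_comm p _ _
      have hβ0 : 0 ≤ β (j + 1) := by rw [hβ' (j + 1)]; exact Real.sqrt_nonneg _
      have hprod : ∏ i ∈ Finset.Icc 1 (j + 1), (β i + 1) =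
          (∏ i ∈ Finset.Icc 1 j, (β i + 1)) * (β (j + 1) + 1) :=
        Finset.prod_Icc_succ_top (by omega) _
      have hfn0 : 0 ≤ fnorm (Y - X) := fnorm_nonneg p _
      have hfnXsX : 0 ≤ fnorm (Xs j - X) := fnorm_nonneg p _
      rw [hprod]
      rw [hXY] at htri2
      have hmul := mul_le_mul_of_nonneg_left htri2 hβ0
      have hmul2 := mul_le_mul_of_nonneg_left IH hβ0
      nlinarith [hstep, htri1, IH, hmul, hmul2, hβ0, hfn0, hfnXsX]
  have hfinal := main (d - 1) (le_refl _)
  simp only [hβ] at hfinal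
  exact hfinal


end TTpaper
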